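/- Let Γ = G *_φ H be the free product of groups G and H with amalgamated subgroups A ≤ G and B ≤ H with respect to an isomorphism φ : A → B, and let G′ ≤ G and H′ ≤ H be subgroups. If the intersections A′ = G′ ∩ A and B′ = H′ ∩ B are both trivial, then the subgroup Γ′ = ⟨G′, H′⟩ of Γ generated by the images of G′ and H′ is naturally isomorphic to the ordinary free product G′ * H′; that is, the canonical homomorphism from the free product G′ * H′ to Γ is injective with image Γ′. -/

import Mathlib

open Monoid

/-- The relator set `{a · φ(a)⁻¹ : a ∈ A}` identifying `A ≤ G` with `B ≤ H` inside the free
product `G ∗ H`. -/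
def amalgRels {G H : Type} [Group G] [Group H] (A : Subgroup G) (B : Subgroup H)
    (φ : A ≃* B) : Set (Coprod G H) :=
  {w | ∃ a : A, w = Coprod.inl (a : G) * (Coprod.inr ((φ a : H)))⁻¹}

/-- The free product `G ∗_φ H` of `G` and `H` with the subgroups `A ≤ G` and `B ≤ H` amalgamated
along the isomorphism `φ : A → B`, i.e. `⟨G, H | a = φ(a) for all a ∈ A⟩`. -/
abbrev Amalg {G H : Type} [Group G] [Group H] (A : Subgroup G) (B : Subgroup H)
    (φ : A ≃* B) : Type :=
  Coprod G H ⧸ Subgroup.normalClosure (amalgRels A B φ)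

/-- The canonical homomorphism `G →* G ∗_φ H`. -/
def Amalg.inlHom {G H : Type} [Group G] [Group H] (A : Subgroup G) (B : Subgroup H)
    (φ : A ≃* B) : G →* Amalg A B φ :=
  (QuotientGroup.mk' _).comp Coprod.inl

/-- The canonical homomorphism `H →* G ∗_φ H`. -/
def Amalg.inrHom {G H : Type} [Group G] [Group H] (A : Subgroup G) (B : Subgroup H)
    (φ : A ≃* B) : H →* Amalg A B φ :=
  (QuotientGroup.mk' _).comp Coprod.inr

/-! ### Auxiliary material -/

instance instGroupCond {X Y : Type} [Group X] [Group Y] : ∀ b : Bool, Group (cond b X Y)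
  | true => ‹Group X›
  | false => ‹Group Y›

def condLift {X Y P : Type} [Group X] [Group Y] [Monoid P] (f : X →* P) (g : Y →* P) :
    ∀ b : Bool, cond b X Y →* P
  | true => f
  | false => g

def amalgBase {G H : Type} [Group G] [Group H] (A : Subgroup G) (B : Subgroup H) (φ : A ≃* B) :
    ∀ b : Bool, ↥A →* cond b G H
  | true => A.subtype
  | false => B.subtype.comp φ.toMonoidHom

theorem amalg_aux_inj {G H : Type} [Group G] [Group H]
    (A : Subgroup G) (B : Subgroup H) (φ : A ≃* B)
    (G' : Subgroup G) (H' : Subgroup H)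
    (hA : G' ⊓ A = ⊥) (hB : H' ⊓ B = ⊥) (x : Coprod ↥G' ↥H')
    (hx : Coprod.lift ((PushoutI.of (φ := amalgBase A B φ) true).comp G'.subtype)
      ((PushoutI.of (φ := amalgBase A B φ) false).comp H'.subtype) x = 1) : x = 1 := by
  classical
  have hψinj : ∀ b, Function.Injective (amalgBase A B φ b) := by
    rintro (_ | _)
    · exact fun a b hab => φ.injective (Subtype.ext hab)
    · exact fun a b hab => Subtype.ext hab
  -- θ : Coprod G' H' →* CoprodI (Bool-indexed family), injective
  let θ : Coprod ↥G' ↥H' →* CoprodI (fun b => cond b ↥G' ↥H') :=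
    Coprod.lift (CoprodI.of (M := fun b => cond b ↥G' ↥H') (i := true)) (CoprodI.of (M := fun b => cond b ↥G' ↥H') (i := false))
  have hθinj : Function.Injective θ := by
    have key : ∀ z : Coprod ↥G' ↥H',
        (CoprodI.lift (condLift (Coprod.inl : ↥G' →* Coprod ↥G' ↥H') Coprod.inr)) (θ z) = z := by
      intro z
      have : ((CoprodI.lift (condLift (Coprod.inl : ↥G' →* Coprod ↥G' ↥H') Coprod.inr)).comp θ)
          = MonoidHom.id _ := by
        apply Coprod.hom_ext
        · ext a; exact CoprodI.lift_of _ _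
        · ext a; exact CoprodI.lift_of _ _
      exact congrArg (fun f => f z) this
    intro a b hab
    rw [← key a, ← key b, hab]
  -- Λ : CoprodI of subgroups →* CoprodI of ambient groups
  let incl : ∀ b : Bool, cond b ↥G' ↥H' →* cond b G H := fun b =>
    match b with
    | true => G'.subtype
    | false => H'.subtype
  let Λ : CoprodI (fun b => cond b ↥G' ↥H') →* CoprodI (fun b => cond b G H) :=
    CoprodI.lift (fun b => (CoprodI.of (i := b)).comp (incl b))
  -- the word corresponding to θ x
  set w := (CoprodI.Word.equiv (M := fun b => cond b ↥G' ↥H')) (θ x) with hwdef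
  have hwprod : CoprodI.Word.prod w = θ x := (CoprodI.Word.equiv (M := fun b => cond b ↥G' ↥H')).left_inv (θ x)
  -- the mapped word
  have hinclinj : ∀ b, Function.Injective (incl b) := by
    rintro (_ | _) a b hab <;> exact Subtype.ext hab
  let w' : CoprodI.Word (fun b => cond b G H) :=
    { toList := w.toList.map (fun l => ⟨l.1, incl l.1 l.2⟩),
      ne_one := by
        intro l hl
        rcases List.mem_map.1 hl with ⟨⟨b, g⟩, hmem, rfl⟩
        intro h1
        exact w.ne_one _ hmem (hinclinj b (by simpa using h1))
      chain_ne := by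
        rw [List.isChain_map]
        exact w.chain_ne }
  have hw'prod : CoprodI.Word.prod w' = Λ (θ x) := by
    rw [← hwprod]
    simp only [CoprodI.Word.prod, w', map_list_prod, List.map_map]
    congr 1
  -- w' is reduced
  have hred : PushoutI.Reduced (amalgBase A B φ) w' := by
    rintro ⟨b, m⟩ hm ⟨a, ha⟩
    rcases List.mem_map.1 hm with ⟨⟨b2, g⟩, hmem, heq⟩
    have hb : b2 = b := congrArg Sigma.fst heq
    subst hb
    have hgm : incl b2 g = m := by simpa using heq
    have hgne : g ≠ 1 := w.ne_one _ hmem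
    cases b2
    · -- false : m ∈ B and m ∈ H'
      have ha' : (amalgBase A B φ false) a = m := ha
      have hmB : m ∈ B := by rw [← ha']; exact (φ a).2
      have hmH' : m ∈ H' := by rw [← hgm]; exact g.2
      have hmbot : m ∈ H' ⊓ B := ⟨hmH', hmB⟩
      rw [hB] at hmbot
      have hm1 : m = 1 := Subgroup.mem_bot.1 hmbot
      have hgg : incl false g = incl false 1 := by rw [hgm, hm1, map_one]
      exact hgne (hinclinj false hgg)
    · -- true : m ∈ A and m ∈ G'
      have ha' : (amalgBase A B φ true) a = m := ha
      have hmA : m ∈ A := by rw [← ha']; exact a.2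
      have hmG' : m ∈ G' := by rw [← hgm]; exact g.2
      have hmbot : m ∈ G' ⊓ A := ⟨hmG', hmA⟩
      rw [hA] at hmbot
      have hm1 : m = 1 := Subgroup.mem_bot.1 hmbot
      have hgg : incl true g = incl true 1 := by rw [hgm, hm1, map_one]
      exact hgne (hinclinj true hgg)
  -- image of w' in the pushout is 1
  have hofF : PushoutI.ofCoprodI (φ := amalgBase A B φ) (CoprodI.Word.prod w') = 1 := by
    rw [hw'prod, ← hx]
    have : (PushoutI.ofCoprodI (φ := amalgBase A B φ)).comp (Λ.comp θ)
        = Coprod.lift ((PushoutI.of (φ := amalgBase A B φ) true).comp G'.subtype)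
          ((PushoutI.of (φ := amalgBase A B φ) false).comp H'.subtype) := by
      apply Coprod.hom_ext
      · ext a
        show PushoutI.ofCoprodI (Λ (θ (Coprod.inl a))) = _
        have h1 : θ (Coprod.inl a) = CoprodI.of (i := true) a := rfl
        rw [h1]
        have h2 : Λ (CoprodI.of (i := true) a) = CoprodI.of (i := true) (G'.subtype a) :=
          CoprodI.lift_of _ _
        rw [h2, PushoutI.ofCoprodI_of]
        rfl
      · ext a
        show PushoutI.ofCoprodI (Λ (θ (Coprod.inr a))) = _
        have h1 : θ (Coprod.inr a) = CoprodI.of (i := false) a := rfl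
        rw [h1]
        have h2 : Λ (CoprodI.of (i := false) a) = CoprodI.of (i := false) (H'.subtype a) :=
          CoprodI.lift_of _ _
        rw [h2, PushoutI.ofCoprodI_of]
        rfl
    exact congrArg (fun f => f x) this
  have hmem : PushoutI.ofCoprodI (φ := amalgBase A B φ) (CoprodI.Word.prod w')
      ∈ (PushoutI.base (amalgBase A B φ)).range := by
    rw [hofF]; exact one_mem _
  have hempty : w' = CoprodI.Word.empty := hred.eq_empty_of_mem_range hψinj hmem
  have hnil : w.toList = [] := by
    have := congrArg CoprodI.Word.toList hempty
    simpa [w'] using this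
  have hwempty : w = CoprodI.Word.empty := CoprodI.Word.ext hnil
  have : θ x = 1 := by
    rw [← hwprod, hwempty, CoprodI.Word.prod_empty]
  have h1 : θ x = θ 1 := by rw [this, map_one]
  exact hθinj h1

/-- The comparison homomorphism from the quotient presentation of the amalgamated product to
Mathlib's `Monoid.PushoutI`. -/
def amalgToPushout {G H : Type} [Group G] [Group H] (A : Subgroup G) (B : Subgroup H)
    (φ : A ≃* B) : Amalg A B φ →* PushoutI (amalgBase A B φ) :=
  QuotientGroup.lift _
    (Coprod.lift (PushoutI.of (φ := amalgBase A B φ) true)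
      (PushoutI.of (φ := amalgBase A B φ) false)) <| by
    intro w hw
    have hle : Subgroup.normalClosure (amalgRels A B φ) ≤
        (Coprod.lift (PushoutI.of (φ := amalgBase A B φ) true)
          (PushoutI.of (φ := amalgBase A B φ) false)).ker := by
      refine Subgroup.normalClosure_le_normal ?_
      rintro w ⟨a, rfl⟩
      have h1 : PushoutI.of (φ := amalgBase A B φ) true ((a : G))
          = PushoutI.base (amalgBase A B φ) a :=
        PushoutI.of_apply_eq_base (amalgBase A B φ) true a
      have h2 : PushoutI.of (φ := amalgBase A B φ) false ((φ a : H))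
          = PushoutI.base (amalgBase A B φ) a :=
        PushoutI.of_apply_eq_base (amalgBase A B φ) false a
      simp only [SetLike.mem_coe, MonoidHom.mem_ker, map_mul, map_inv]
      show PushoutI.of (φ := amalgBase A B φ) true ((a : G)) *
          (PushoutI.of (φ := amalgBase A B φ) false ((φ a : H)))⁻¹ = 1
      rw [h1, h2, mul_inv_cancel]
    exact hle hw

/-- **Corollary (1).**  Let `Γ = G ∗_φ H` with amalgamated subgroups `A ≤ G`, `B ≤ H` along
`φ : A ≃ B`, and let `G′ ≤ G`, `H′ ≤ H` be subgroups whose intersections `A′ = G′ ∩ A` and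
`B′ = H′ ∩ B` are both trivial.  Then the subgroup `Γ′ = ⟨G′, H′⟩` of `Γ` is naturally isomorphic
to the ordinary free product `G′ ∗ H′`: the canonical homomorphism `G′ ∗ H′ → Γ` is injective
with range `Γ′`. -/
theorem amalg_subgroup_free_product {G H : Type} [Group G] [Group H]
    (A : Subgroup G) (B : Subgroup H) (φ : A ≃* B)
    (G' : Subgroup G) (H' : Subgroup H)
    (hA : G' ⊓ A = ⊥) (hB : H' ⊓ B = ⊥) :
    Function.Injective
      ⇑(Coprod.lift ((Amalg.inlHom A B φ).comp G'.subtype)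
        ((Amalg.inrHom A B φ).comp H'.subtype)) ∧
    (Coprod.lift ((Amalg.inlHom A B φ).comp G'.subtype)
        ((Amalg.inrHom A B φ).comp H'.subtype)).range
      = G'.map (Amalg.inlHom A B φ) ⊔ H'.map (Amalg.inrHom A B φ) := by
  constructor
  · rw [injective_iff_map_eq_one]
    intro x hx
    refine amalg_aux_inj A B φ G' H' hA hB x ?_
    have hcomp : (amalgToPushout A B φ).comp
        (Coprod.lift ((Amalg.inlHom A B φ).comp G'.subtype)
          ((Amalg.inrHom A B φ).comp H'.subtype))
        = Coprod.lift ((PushoutI.of (φ := amalgBase A B φ) true).comp G'.subtype)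
          ((PushoutI.of (φ := amalgBase A B φ) false).comp H'.subtype) :=
      Coprod.hom_ext rfl rfl
    calc Coprod.lift ((PushoutI.of (φ := amalgBase A B φ) true).comp G'.subtype)
          ((PushoutI.of (φ := amalgBase A B φ) false).comp H'.subtype) x
        = amalgToPushout A B φ (Coprod.lift ((Amalg.inlHom A B φ).comp G'.subtype)
            ((Amalg.inrHom A B φ).comp H'.subtype) x) := (congrArg (fun f => f x) hcomp).symm
      _ = 1 := by rw [hx, map_one]
  · rw [Coprod.range_lift, MonoidHom.range_comp, MonoidHom.range_comp,
      Subgroup.range_subtype, Subgroup.range_subtype]
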